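/- Let W̃ be the Coxeter group of type G̃₂ and let x ∈ W̃ be any involution, with X the conjugacy class of x in W̃. Then the commuting involution graph C(W̃, X) is not connected. -/

import Mathlib

/-- The Coxeter matrix of affine type G̃₂, on generator indices 0, 1, 2 (corresponding to
r₁, r₂, r₃): m(i,i) = 1, m(0,1) = 6, m(1,2) = 3, m(0,2) = 2. -/
def G2AffMatrix : CoxeterMatrix (Fin 3) where
  M := Matrix.of fun i j : Fin 3 =>
    if i = j then 1
    else if (i = 0 ∧ j = 1) ∨ (i = 1 ∧ j = 0) then 6
    else if (i = 1 ∧ j = 2) ∨ (i = 2 ∧ j = 1) then 3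
    else 2
  isSymm := by decide
  diagonal := by decide
  off_diagonal := by
    intro i i' h
    fin_cases i <;> fin_cases i' <;> simp_all [Matrix.of_apply]

/-- The affine Coxeter group of type G̃₂. -/
abbrev G2Aff : Type _ := G2AffMatrix.Group

/-- The commuting involution graph on a set X of elements of a group G: the vertices are
the elements of X, and two distinct vertices are adjacent iff they commute in G. -/
def commGraph (G : Type*) [Group G] (X : Set G) : SimpleGraph X where
  Adj x y := (x : G) ≠ (y : G) ∧ (x : G) * y = (y : G) * x
  symm := ⟨fun x y h => ⟨h.1.symm, h.2.symm⟩⟩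
  loopless := ⟨fun x h => h.1 rfl⟩

namespace G2Proof

abbrev M2 := Matrix (Fin 2) (Fin 2) ℤ
abbrev M3 := Matrix (Fin 3) (Fin 3) ℤ

def aff (p : M2) (v : Fin 2 → ℤ) : M3 :=
  !![p 0 0, p 0 1, v 0; p 1 0, p 1 1, v 1; 0, 0, 1]

lemma aff_mul (p q : M2) (u v : Fin 2 → ℤ) :
    aff p u * aff q v = aff (p * q) (p.mulVec v + u) := by
  ext i j
  fin_cases i <;> fin_cases j <;>
    simp [aff, Matrix.mul_apply, Matrix.mulVec, dotProduct, Fin.sum_univ_three,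
      Fin.sum_univ_two, Matrix.one_apply]

lemma aff_one : aff 1 0 = (1 : M3) := by decide

lemma aff_inj {p q : M2} {u v : Fin 2 → ℤ} (h : aff p u = aff q v) : p = q ∧ u = v := by
  have e : ∀ i j, aff p u i j = aff q v i j := fun i j => congrFun (congrFun h i) j
  have e00 := e 0 0; have e01 := e 0 1; have e10 := e 1 0; have e11 := e 1 1
  have f0 := e 0 2; have f1 := e 1 2
  simp only [aff, Matrix.cons_val', Matrix.cons_val_zero, Matrix.cons_val_one, Matrix.head_cons,
    Matrix.empty_val', Matrix.cons_val_fin_one, Matrix.head_fin_const] at e00 e01 e10 e11 f0 f1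
  constructor
  · ext i j; fin_cases i <;> fin_cases j <;> assumption
  · ext i; fin_cases i <;> assumption
def m1 : M2 := !![-1,3;0,1]
def m2 : M2 := !![1,0;1,-1]
def m3 : M2 := !![1,-3;0,-1]
def th : Fin 2 → ℤ := ![3,2]

abbrev G := M3ˣ

def U1 : G := ⟨aff m1 0, aff m1 0, by decide, by decide⟩
def U2 : G := ⟨aff m2 0, aff m2 0, by decide, by decide⟩
def U3 : G := ⟨aff m3 th, aff m3 th, by decide, by decide⟩

def tau (v : Fin 2 → ℤ) : G :=
  ⟨aff 1 v, aff 1 (-v), by rw [aff_mul]; simp [aff_one], by rw [aff_mul]; simp [aff_one]⟩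

lemma tau_mul (a b : Fin 2 → ℤ) : tau a * tau b = tau (a + b) := by
  apply Units.ext
  show aff 1 a * aff 1 b = aff 1 (a + b)
  rw [aff_mul]; simp [add_comm]

lemma tau_zpow (v : Fin 2 → ℤ) (m : ℤ) : tau v ^ m = tau (m • v) := by
  induction m using Int.induction_on with
  | zero => apply Units.ext; show (1 : M3) = aff 1 (0 • v); simp [aff_one.symm]
  | succ k ih => rw [zpow_add_one, ih, tau_mul]; congr 1; module
  | pred k ih =>
      rw [zpow_sub_one, ih]
      have h2 : tau ((-(k:ℤ) - 1) • v) * tau v = tau ((-(k : ℤ)) • v) := by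
        rw [tau_mul]; congr 1; module
      calc tau ((-(k:ℤ)) • v) * (tau v)⁻¹ = tau ((-(k:ℤ)-1) • v) * tau v * (tau v)⁻¹ := by
            rw [h2]
        _ = tau ((-(k:ℤ)-1) • v) := by group
abbrev cs : CoxeterSystem G2AffMatrix G2Aff := G2AffMatrix.toCoxeterSystem

def fgen : Fin 3 → G := ![U1, U2, U3]

lemma liftable : CoxeterMatrix.IsLiftable G2AffMatrix fgen := by
  intro i j
  apply Units.ext
  rw [Units.val_pow_eq_pow_val, Units.val_mul]
  fin_cases i <;> fin_cases j <;> decide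

def rho : G2Aff →* G := cs.lift ⟨fgen, liftable⟩

lemma rho_simple (i : Fin 3) : rho (cs.simple i) = fgen i := cs.lift_apply_simple liftable i

abbrev pi (l : List (Fin 3)) : G2Aff := cs.wordProd l

lemma key {x y : List (Fin 3)} (h : pi x = pi y) (a b : List (Fin 3)) :
    pi (a ++ (x ++ b)) = pi (a ++ (y ++ b)) := by
  simp only [pi, CoxeterSystem.wordProd_append, h]

lemma pi_pair (i : Fin 3) : pi [i, i] = pi [] := by
  have : ([i, i] : List (Fin 3)) = [i] ++ [i] := rfl
  rw [this, pi, CoxeterSystem.wordProd_append]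
  simp only [CoxeterSystem.wordProd_singleton, CoxeterSystem.wordProd_nil]
  exact cs.simple_mul_simple_self i

lemma dd (i : Fin 3) (a b : List (Fin 3)) : pi (a ++ ([i,i] ++ b)) = pi (a ++ b) :=
  (key (pi_pair i) a b).trans (by rw [List.nil_append])

lemma braid01 : pi [0,1,0,1,0,1] = pi [1,0,1,0,1,0] := cs.wordProd_braidWord_eq 0 1
lemma braid12 : pi [1,2,1] = pi [2,1,2] := cs.wordProd_braidWord_eq 2 1
lemma braid02 : pi [0,2] = pi [2,0] := (cs.wordProd_braidWord_eq 2 0).symm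

lemma br01 (a b : List (Fin 3)) : pi (a ++ ([0,1,0,1,0,1] ++ b)) = pi (a ++ ([1,0,1,0,1,0] ++ b)) :=
  key braid01 a b
lemma br12 (a b : List (Fin 3)) : pi (a ++ ([1,2,1] ++ b)) = pi (a ++ ([2,1,2] ++ b)) :=
  key braid12 a b
lemma br02 (a b : List (Fin 3)) : pi (a ++ ([0,2] ++ b)) = pi (a ++ ([2,0] ++ b)) :=
  key braid02 a b
lemma idI1 : pi [2,1,0,1,0,1,0,1,2,1,0,1] = pi [0,1,2,1,0,1,2,1,0,1,0,1] := by
  calc pi [2,1,0,1,0,1,0,1,2,1,0,1]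
    _ = pi [2,1,1,0,1,0,1,0,2,1,0,1] := br01 [2,1] [2,1,0,1]
    _ = pi [2,0,1,0,1,0,2,1,0,1] := dd 1 [2] [0,1,0,1,0,2,1,0,1]
    _ = pi [2,0,1,2,2,0,1,0,2,1,0,1] := (dd 2 [2,0,1] [0,1,0,2,1,0,1]).symm
    _ = pi [2,0,1,2,2,0,1,2,0,1,0,1] := br02 [2,0,1,2,2,0,1] [1,0,1]
    _ = pi [2,0,1,2,0,2,1,2,0,1,0,1] := (br02 [2,0,1,2] [1,2,0,1,0,1]).symm
    _ = pi [0,2,1,2,0,2,1,2,0,1,0,1] := (br02 [] [1,2,0,2,1,2,0,1,0,1]).symm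
    _ = pi [0,2,1,2,0,1,2,1,0,1,0,1] := (br12 [0,2,1,2,0] [0,1,0,1]).symm
    _ = pi [0,1,2,1,0,1,2,1,0,1,0,1] := (br12 [0] [0,1,2,1,0,1,0,1]).symm

lemma idI2a : pi [0,2,1,0,1,0,1,0] = pi [2,1,0,1,0,1] := by
  calc pi [0,2,1,0,1,0,1,0]
    _ = pi [0,2,0,1,0,1,0,1] := (br01 [0,2] []).symm
    _ = pi [0,0,2,1,0,1,0,1] := (br02 [0] [1,0,1,0,1]).symm
    _ = pi [2,1,0,1,0,1] := dd 0 [] [2,1,0,1,0,1]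

lemma idI2b : pi [0,0,1,2,1,0,1,0] = pi [2,1,0,1,0,1,1,0,1,2,1,0] := by
  calc pi [0,0,1,2,1,0,1,0]
    _ = pi [1,2,1,0,1,0] := dd 0 [] [1,2,1,0,1,0]
    _ = pi [2,1,2,0,1,0] := br12 [] [0,1,0]
    _ = pi [2,1,0,2,1,0] := (br02 [2,1] [1,0]).symm
    _ = pi [2,1,0,1,1,2,1,0] := (dd 1 [2,1,0] [2,1,0]).symm
    _ = pi [2,1,0,1,0,0,1,2,1,0] := (dd 0 [2,1,0,1] [1,2,1,0]).symm
    _ = pi [2,1,0,1,0,1,1,0,1,2,1,0] := (dd 1 [2,1,0,1,0] [0,1,2,1,0]).symm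

lemma idI2c : pi [1,2,1,0,1,0,1,1] = pi [2,1,0,1,0,1,1,0,1,2,1,0] := by
  calc pi [1,2,1,0,1,0,1,1]
    _ = pi [1,2,1,0,1,0] := dd 1 [1,2,1,0,1,0] []
    _ = pi [2,1,2,0,1,0] := br12 [] [0,1,0]
    _ = pi [2,1,0,2,1,0] := (br02 [2,1] [1,0]).symm
    _ = pi [2,1,0,1,1,2,1,0] := (dd 1 [2,1,0] [2,1,0]).symm
    _ = pi [2,1,0,1,0,0,1,2,1,0] := (dd 0 [2,1,0,1] [1,2,1,0]).symm
    _ = pi [2,1,0,1,0,1,1,0,1,2,1,0] := (dd 1 [2,1,0,1,0] [0,1,2,1,0]).symm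

lemma idI2d : pi [1,0,1,2,1,0,1,1] = pi [1,0,1,2,1,0] := by
  calc pi [1,0,1,2,1,0,1,1]
    _ = pi [1,0,1,2,1,0] := dd 1 [1,0,1,2,1,0] []

lemma idI3 : pi [1,0,1,0,1,1,0,1,0,1] = pi [] := by
  calc pi [1,0,1,0,1,1,0,1,0,1]
    _ = pi [1,0,1,0,0,1,0,1] := dd 1 [1,0,1,0] [0,1,0,1]
    _ = pi [1,0,1,1,0,1] := dd 0 [1,0,1] [1,0,1]
    _ = pi [1,0,0,1] := dd 1 [1,0] [0,1]
    _ = pi [1,1] := dd 0 [1] [1]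
    _ = pi [] := dd 1 [] []

lemma st0_e : pi [0] = pi [0] := by
  rfl

lemma st0_0 : pi [0,0] = pi [] := by
  calc pi [0,0]
    _ = pi [] := dd 0 [] []

lemma st0_1 : pi [0,1] = pi [0,1] := by
  rfl

lemma st0_01 : pi [0,0,1] = pi [1] := by
  calc pi [0,0,1]
    _ = pi [1] := dd 0 [] [1]

lemma st0_10 : pi [0,1,0] = pi [0,1,0] := by
  rfl

lemma st0_010 : pi [0,0,1,0] = pi [1,0] := by
  calc pi [0,0,1,0]
    _ = pi [1,0] := dd 0 [] [1,0]

lemma st0_101 : pi [0,1,0,1] = pi [0,1,0,1] := by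
  rfl

lemma st0_0101 : pi [0,0,1,0,1] = pi [1,0,1] := by
  calc pi [0,0,1,0,1]
    _ = pi [1,0,1] := dd 0 [] [1,0,1]

lemma st0_1010 : pi [0,1,0,1,0] = pi [0,1,0,1,0] := by
  rfl

lemma st0_01010 : pi [0,0,1,0,1,0] = pi [1,0,1,0] := by
  calc pi [0,0,1,0,1,0]
    _ = pi [1,0,1,0] := dd 0 [] [1,0,1,0]

lemma st0_10101 : pi [0,1,0,1,0,1] = pi [0,1,0,1,0,1] := by
  rfl

lemma st0_010101 : pi [0,0,1,0,1,0,1] = pi [1,0,1,0,1] := by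
  calc pi [0,0,1,0,1,0,1]
    _ = pi [1,0,1,0,1] := dd 0 [] [1,0,1,0,1]

lemma st1_e : pi [1] = pi [1] := by
  rfl

lemma st1_0 : pi [1,0] = pi [1,0] := by
  rfl

lemma st1_1 : pi [1,1] = pi [] := by
  calc pi [1,1]
    _ = pi [] := dd 1 [] []

lemma st1_01 : pi [1,0,1] = pi [1,0,1] := by
  rfl

lemma st1_10 : pi [1,1,0] = pi [0] := by
  calc pi [1,1,0]
    _ = pi [0] := dd 1 [] [0]

lemma st1_010 : pi [1,0,1,0] = pi [1,0,1,0] := by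
  rfl

lemma st1_101 : pi [1,1,0,1] = pi [0,1] := by
  calc pi [1,1,0,1]
    _ = pi [0,1] := dd 1 [] [0,1]

lemma st1_0101 : pi [1,0,1,0,1] = pi [1,0,1,0,1] := by
  rfl

lemma st1_1010 : pi [1,1,0,1,0] = pi [0,1,0] := by
  calc pi [1,1,0,1,0]
    _ = pi [0,1,0] := dd 1 [] [0,1,0]

lemma st1_01010 : pi [1,0,1,0,1,0] = pi [0,1,0,1,0,1] := by
  calc pi [1,0,1,0,1,0]
    _ = pi [0,1,0,1,0,1] := (br01 [] []).symm

lemma st1_10101 : pi [1,1,0,1,0,1] = pi [0,1,0,1] := by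
  calc pi [1,1,0,1,0,1]
    _ = pi [0,1,0,1] := dd 1 [] [0,1,0,1]

lemma st1_010101 : pi [1,0,1,0,1,0,1] = pi [0,1,0,1,0] := by
  calc pi [1,0,1,0,1,0,1]
    _ = pi [1,1,0,1,0,1,0] := br01 [1] []
    _ = pi [0,1,0,1,0] := dd 1 [] [0,1,0,1,0]
def t1 : G2Aff := pi [2,1,0,1,0,1]
def t2 : G2Aff := pi [0,1,2,1,0,1]

def T : Subgroup G2Aff := Subgroup.closure {t1, t2}

lemma t1_def : t1 = pi [2,1,0,1,0,1] := rfl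
lemma t2_def : t2 = pi [0,1,2,1,0,1] := rfl
lemma pi_append (a b : List (Fin 3)) : pi (a ++ b) = pi a * pi b := cs.wordProd_append a b
lemma pi_cons (i : Fin 3) (l : List (Fin 3)) : pi (i :: l) = cs.simple i * pi l :=
  cs.wordProd_cons i l
lemma pi_nil : pi [] = 1 := cs.wordProd_nil

lemma t1_mem : t1 ∈ T := Subgroup.subset_closure (by simp)
lemma t2_mem : t2 ∈ T := Subgroup.subset_closure (by simp)

lemma t_comm : t1 * t2 = t2 * t1 := by
  have h1 := cs.wordProd_append [2,1,0,1,0,1] [0,1,2,1,0,1]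
  have h2 := cs.wordProd_append [0,1,2,1,0,1] [2,1,0,1,0,1]
  exact h1.symm.trans (idI1.trans h2)

lemma t2_inv : t2⁻¹ = pi [1,0,1,2,1,0] := by
  have h := cs.wordProd_reverse [0,1,2,1,0,1]
  exact h.symm

lemma sandwich (i : Fin 3) (w : List (Fin 3)) :
    cs.simple i * pi w * cs.simple i = pi ([i] ++ (w ++ [i])) := by
  simp only [pi, CoxeterSystem.wordProd_append, CoxeterSystem.wordProd_singleton, mul_assoc]

lemma c0t1 : cs.simple 0 * t1 * cs.simple 0 = t1 := by
  rw [t1_def]; exact (sandwich 0 [2,1,0,1,0,1]).trans idI2a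

lemma c0t2 : cs.simple 0 * t2 * cs.simple 0 = t1 * t2⁻¹ := by
  have h : cs.simple 0 * t2 * cs.simple 0 = pi [2,1,0,1,0,1,1,0,1,2,1,0] :=
    (sandwich 0 [0,1,2,1,0,1]).trans idI2b
  have h3 : pi [2,1,0,1,0,1,1,0,1,2,1,0] = pi [2,1,0,1,0,1] * pi [1,0,1,2,1,0] :=
    pi_append [2,1,0,1,0,1] [1,0,1,2,1,0]
  rw [h, h3, ← t2_inv, ← t1_def]

lemma c1t1 : cs.simple 1 * t1 * cs.simple 1 = t1 * t2⁻¹ := by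
  have h : cs.simple 1 * t1 * cs.simple 1 = pi [2,1,0,1,0,1,1,0,1,2,1,0] :=
    (sandwich 1 [2,1,0,1,0,1]).trans idI2c
  have h3 : pi [2,1,0,1,0,1,1,0,1,2,1,0] = pi [2,1,0,1,0,1] * pi [1,0,1,2,1,0] :=
    pi_append [2,1,0,1,0,1] [1,0,1,2,1,0]
  rw [h, h3, ← t2_inv, ← t1_def]

lemma c1t2 : cs.simple 1 * t2 * cs.simple 1 = t2⁻¹ := by
  have h : cs.simple 1 * t2 * cs.simple 1 = pi [1,0,1,2,1,0] :=
    (sandwich 1 [0,1,2,1,0,1]).trans idI2d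
  rw [h, ← t2_inv]

lemma Tstep (i : Fin 3) (hi : i = 0 ∨ i = 1) : ∀ t ∈ T, cs.simple i * t * cs.simple i ∈ T := by
  intro t ht
  induction ht using Subgroup.closure_induction with
  | mem z hz =>
      rcases hz with hz | hz <;> subst hz <;> rcases hi with hi | hi <;> subst hi
      · rw [c0t1]; exact t1_mem
      · rw [c1t1]; exact mul_mem t1_mem (inv_mem t2_mem)
      · rw [c0t2]; exact mul_mem t1_mem (inv_mem t2_mem)
      · rw [c1t2]; exact inv_mem t2_mem
  | one =>
      rw [mul_one]
      rw [cs.simple_mul_simple_self i]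
      exact one_mem T
  | mul a b ha hb iha ihb =>
      have hss : cs.simple i * cs.simple i = 1 := cs.simple_mul_simple_self i
      have : a * b = a * (cs.simple i * cs.simple i) * b := by rw [hss, mul_one]
      rw [this]
      have e : cs.simple i * (a * (cs.simple i * cs.simple i) * b) * cs.simple i
          = (cs.simple i * a * cs.simple i) * (cs.simple i * b * cs.simple i) := by
        simp only [mul_assoc]
      rw [e]
      exact mul_mem iha ihb
  | inv a ha iha =>
      have e : cs.simple i * a⁻¹ * cs.simple i = (cs.simple i * a * cs.simple i)⁻¹ := by
        rw [mul_inv_rev, mul_inv_rev, cs.inv_simple]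
        simp [mul_assoc]
      rw [e]
      exact inv_mem iha

lemma Tmem : ∀ t ∈ T, ∃ m n : ℤ, t = t1 ^ m * t2 ^ n := by
  intro t ht
  have hc : Commute t1 t2 := t_comm
  induction ht using Subgroup.closure_induction with
  | mem z hz =>
      rcases hz with hz | hz <;> subst hz
      · exact ⟨1, 0, by simp⟩
      · exact ⟨0, 1, by simp⟩
  | one => exact ⟨0, 0, by simp⟩
  | mul a b ha hb iha ihb =>
      obtain ⟨m, n, rfl⟩ := iha
      obtain ⟨m', n', rfl⟩ := ihb
      refine ⟨m + m', n + n', ?_⟩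
      have hcc : t2 ^ n * t1 ^ m' = t1 ^ m' * t2 ^ n := ((hc.symm).zpow_zpow n m').eq
      calc t1 ^ m * t2 ^ n * (t1 ^ m' * t2 ^ n')
          = t1 ^ m * (t2 ^ n * t1 ^ m') * t2 ^ n' := by simp only [mul_assoc]
        _ = t1 ^ m * (t1 ^ m' * t2 ^ n) * t2 ^ n' := by rw [hcc]
        _ = (t1 ^ m * t1 ^ m') * (t2 ^ n * t2 ^ n') := by simp only [mul_assoc]
        _ = t1 ^ (m + m') * t2 ^ (n + n') := by rw [← zpow_add, ← zpow_add]
  | inv a ha iha =>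
      obtain ⟨m, n, rfl⟩ := iha
      refine ⟨-m, -n, ?_⟩
      have hcc : t2 ^ (-n) * t1 ^ (-m) = t1 ^ (-m) * t2 ^ (-n) := ((hc.symm).zpow_zpow (-n) (-m)).eq
      rw [mul_inv_rev, ← zpow_neg, ← zpow_neg, hcc]

def reps : List (List (Fin 3)) :=
  [[],[0],[1],[0,1],[1,0],[0,1,0],[1,0,1],[0,1,0,1],[1,0,1,0],[0,1,0,1,0],[1,0,1,0,1],[0,1,0,1,0,1]]

lemma reps_letters : ∀ w ∈ reps, ∀ j ∈ w, j = 0 ∨ j = 1 := by decide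
lemma step0 : ∀ w ∈ reps, ∃ w' ∈ reps, cs.simple 0 * pi w = pi w' := by
  intro w hw
  fin_cases hw
  · exact ⟨[0], by decide, (cs.wordProd_cons 0 []).symm.trans st0_e⟩
  · exact ⟨[], by decide, (cs.wordProd_cons 0 [0]).symm.trans st0_0⟩
  · exact ⟨[0,1], by decide, (cs.wordProd_cons 0 [1]).symm.trans st0_1⟩
  · exact ⟨[1], by decide, (cs.wordProd_cons 0 [0,1]).symm.trans st0_01⟩
  · exact ⟨[0,1,0], by decide, (cs.wordProd_cons 0 [1,0]).symm.trans st0_10⟩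
  · exact ⟨[1,0], by decide, (cs.wordProd_cons 0 [0,1,0]).symm.trans st0_010⟩
  · exact ⟨[0,1,0,1], by decide, (cs.wordProd_cons 0 [1,0,1]).symm.trans st0_101⟩
  · exact ⟨[1,0,1], by decide, (cs.wordProd_cons 0 [0,1,0,1]).symm.trans st0_0101⟩
  · exact ⟨[0,1,0,1,0], by decide, (cs.wordProd_cons 0 [1,0,1,0]).symm.trans st0_1010⟩
  · exact ⟨[1,0,1,0], by decide, (cs.wordProd_cons 0 [0,1,0,1,0]).symm.trans st0_01010⟩
  · exact ⟨[0,1,0,1,0,1], by decide, (cs.wordProd_cons 0 [1,0,1,0,1]).symm.trans st0_10101⟩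
  · exact ⟨[1,0,1,0,1], by decide, (cs.wordProd_cons 0 [0,1,0,1,0,1]).symm.trans st0_010101⟩

lemma step1 : ∀ w ∈ reps, ∃ w' ∈ reps, cs.simple 1 * pi w = pi w' := by
  intro w hw
  fin_cases hw
  · exact ⟨[1], by decide, (cs.wordProd_cons 1 []).symm.trans st1_e⟩
  · exact ⟨[1,0], by decide, (cs.wordProd_cons 1 [0]).symm.trans st1_0⟩
  · exact ⟨[], by decide, (cs.wordProd_cons 1 [1]).symm.trans st1_1⟩
  · exact ⟨[1,0,1], by decide, (cs.wordProd_cons 1 [0,1]).symm.trans st1_01⟩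
  · exact ⟨[0], by decide, (cs.wordProd_cons 1 [1,0]).symm.trans st1_10⟩
  · exact ⟨[1,0,1,0], by decide, (cs.wordProd_cons 1 [0,1,0]).symm.trans st1_010⟩
  · exact ⟨[0,1], by decide, (cs.wordProd_cons 1 [1,0,1]).symm.trans st1_101⟩
  · exact ⟨[1,0,1,0,1], by decide, (cs.wordProd_cons 1 [0,1,0,1]).symm.trans st1_0101⟩
  · exact ⟨[0,1,0], by decide, (cs.wordProd_cons 1 [1,0,1,0]).symm.trans st1_1010⟩
  · exact ⟨[0,1,0,1,0,1], by decide, (cs.wordProd_cons 1 [0,1,0,1,0]).symm.trans st1_01010⟩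
  · exact ⟨[0,1,0,1], by decide, (cs.wordProd_cons 1 [1,0,1,0,1]).symm.trans st1_10101⟩
  · exact ⟨[0,1,0,1,0], by decide, (cs.wordProd_cons 1 [0,1,0,1,0,1]).symm.trans st1_010101⟩

lemma mulrep : ∀ l : List (Fin 3), (∀ j ∈ l, j = 0 ∨ j = 1) →
    ∀ w ∈ reps, ∃ w' ∈ reps, pi l * pi w = pi w' := by
  intro l
  induction l with
  | nil => intro _ w hw; exact ⟨w, hw, by simp [pi]⟩
  | cons i l ih =>
      intro hl w hw
      obtain ⟨w1, hw1, he1⟩ := ih (fun j hj => hl j (List.mem_cons_of_mem i hj)) w hw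
      have hi := hl i List.mem_cons_self
      have hcons : pi (i :: l) = cs.simple i * pi l := cs.wordProd_cons i l
      rcases hi with hi | hi <;> subst hi
      · obtain ⟨w', hw', he'⟩ := step0 w1 hw1
        exact ⟨w', hw', by rw [hcons, mul_assoc, he1, he']⟩
      · obtain ⟨w', hw', he'⟩ := step1 w1 hw1
        exact ⟨w', hw', by rw [hcons, mul_assoc, he1, he']⟩

lemma Tconj : ∀ l : List (Fin 3), (∀ j ∈ l, j = 0 ∨ j = 1) →
    ∀ t ∈ T, (pi l)⁻¹ * t * pi l ∈ T := by
  intro l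
  induction l with
  | nil => intro _ t ht; simpa [pi] using ht
  | cons i l ih =>
      intro hl t ht
      have hi := hl i List.mem_cons_self
      have hcons : pi (i :: l) = cs.simple i * pi l := cs.wordProd_cons i l
      have hmid : cs.simple i * t * cs.simple i ∈ T := Tstep i hi t ht
      have e : (pi (i :: l))⁻¹ * t * pi (i :: l)
          = (pi l)⁻¹ * (cs.simple i * t * cs.simple i) * pi l := by
        rw [hcons, mul_inv_rev, cs.inv_simple]
        simp only [mul_assoc]
      rw [e]
      exact ih (fun j hj => hl j (List.mem_cons_of_mem i hj)) _ hmid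

lemma s2_eq : cs.simple 2 = t1 * pi [1,0,1,0,1] := by
  have h1 : pi ([1,0,1,0,1] ++ [1,0,1,0,1]) = 1 := idI3.trans pi_nil
  have h2 : t1 = cs.simple 2 * pi [1,0,1,0,1] := pi_cons 2 [1,0,1,0,1]
  calc cs.simple 2 = cs.simple 2 * pi ([1,0,1,0,1] ++ [1,0,1,0,1]) := by rw [h1, mul_one]
    _ = cs.simple 2 * pi [1,0,1,0,1] * pi [1,0,1,0,1] := by
        rw [pi_append, mul_assoc]
    _ = t1 * pi [1,0,1,0,1] := by rw [← h2]

lemma cover : ∀ g : G2Aff, ∃ w ∈ reps, ∃ t ∈ T, g = pi w * t := by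
  have main : ∀ l : List (Fin 3), ∃ w ∈ reps, ∃ t ∈ T, pi l = pi w * t := by
    intro l
    induction l with
    | nil => exact ⟨[], by decide, 1, one_mem T, by rw [pi_nil, mul_one]⟩
    | cons i l ih =>
        obtain ⟨w, hw, t, ht, he⟩ := ih
        have hcons : pi (i :: l) = cs.simple i * pi l := pi_cons i l
        have hi : i = 0 ∨ i = 1 ∨ i = 2 := by
          fin_cases i
          exacts [Or.inl rfl, Or.inr (Or.inl rfl), Or.inr (Or.inr rfl)]
        rcases hi with rfl | rfl | rfl
        · obtain ⟨w', hw', he'⟩ := step0 w hw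
          exact ⟨w', hw', t, ht, by rw [hcons, he, ← mul_assoc, he']⟩
        · obtain ⟨w', hw', he'⟩ := step1 w hw
          exact ⟨w', hw', t, ht, by rw [hcons, he, ← mul_assoc, he']⟩
        · obtain ⟨w', hw', he'⟩ := mulrep [1,0,1,0,1] (by decide) w hw
          refine ⟨w', hw', ((pi w')⁻¹ * t1 * pi w') * t,
            mul_mem (Tconj w' (reps_letters w' hw') t1 t1_mem) ht, ?_⟩
          rw [hcons, he, s2_eq]
          calc t1 * pi [1,0,1,0,1] * (pi w * t)
              = t1 * (pi [1,0,1,0,1] * pi w) * t := by simp only [mul_assoc]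
            _ = t1 * pi w' * t := by rw [he']
            _ = pi w' * ((pi w')⁻¹ * t1 * pi w' * t) := by group
  intro g
  obtain ⟨l, rfl⟩ := cs.wordProd_surjective g
  exact main l
lemma rho_pi (l : List (Fin 3)) : rho (pi l) = (l.map fgen).prod := by
  induction l with
  | nil => rw [pi_nil, map_one]; rfl
  | cons i l ih => rw [pi_cons, map_mul, rho_simple, ih]; rfl

lemma rho_t1 : rho t1 = tau th := by
  apply Units.ext
  rw [t1_def, rho_pi]
  show (([2,1,0,1,0,1].map fgen).prod : M3) = aff 1 th
  decide

lemma rho_t2 : rho t2 = tau ![0,1] := by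
  apply Units.ext
  rw [t2_def, rho_pi]
  show (([0,1,2,1,0,1].map fgen).prod : M3) = aff 1 ![0,1]
  decide

def mgen : Fin 3 → M2 := ![m1, m2, m3]

lemma rho_aff0 : ∀ l : List (Fin 3), (∀ j ∈ l, j = 0 ∨ j = 1) →
    (rho (pi l) : M3) = aff ((l.map mgen).prod) 0 := by
  intro l
  induction l with
  | nil =>
      intro _
      rw [pi_nil, map_one]
      show (1 : M3) = aff (List.prod []) 0
      rw [List.prod_nil, aff_one]
  | cons j l ih =>
      intro hl
      have hj := hl j List.mem_cons_self
      have hrest := ih (fun k hk => hl k (List.mem_cons_of_mem j hk))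
      rw [pi_cons, map_mul, rho_simple, Units.val_mul, hrest]
      have hgen : ((fgen j : G) : M3) = aff (mgen j) 0 := by
        rcases hj with rfl | rfl <;> rfl
      rw [hgen, aff_mul, Matrix.mulVec_zero, add_zero]
      rfl

lemma rho_inj_one : ∀ g : G2Aff, rho g = 1 → g = 1 := by
  intro g hg
  obtain ⟨w, hw, t, ht, rfl⟩ := cover g
  obtain ⟨m, n, rfl⟩ := Tmem t ht
  set v : Fin 2 → ℤ := m • th + n • ![0,1] with hv
  have hrt : rho (t1 ^ m * t2 ^ n) = tau v := by
    rw [map_mul, map_zpow, map_zpow, rho_t1, rho_t2, tau_zpow, tau_zpow, tau_mul]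
  have h1 : rho (pi w) * tau v = 1 := by rw [← hrt, ← map_mul]; exact hg
  have hmat : (rho (pi w) : M3) * aff 1 v = 1 := by
    have := congrArg Units.val h1
    rwa [Units.val_mul] at this
  have haff := rho_aff0 w (reps_letters w hw)
  rw [haff, aff_mul, mul_one] at hmat
  have hmat' : aff ((w.map mgen).prod) ((w.map mgen).prod.mulVec v + 0) = aff 1 0 := by
    rw [hmat, aff_one]
  obtain ⟨hP, hvec⟩ := aff_inj hmat'
  have hwnil : w = [] := by
    fin_cases hw
    · rfl
    all_goals exact absurd hP (by decide)
  subst hwnil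
  have hveq : v = 0 := by
    rw [show ((List.map mgen []).prod : M2) = 1 from rfl, Matrix.one_mulVec, add_zero] at hvec
    exact hvec
  have h0 := congrFun hveq 0
  have h1' := congrFun hveq 1
  simp only [hv, Pi.add_apply, Pi.smul_apply, smul_eq_mul, th, Matrix.cons_val_zero,
    Matrix.cons_val_one, Matrix.head_cons, Pi.zero_apply] at h0 h1'
  have hm : m = 0 := by omega
  have hn : n = 0 := by omega
  rw [hm, hn, pi_nil, zpow_zero, zpow_zero, one_mul, mul_one]

lemma rho_inj {a b : G2Aff} (h : rho a = rho b) : a = b := by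
  have : rho (a * b⁻¹) = 1 := by rw [map_mul, map_inv, h, mul_inv_cancel]
  exact mul_inv_eq_one.mp (rho_inj_one _ this)
def Wlist : List M2 := [!![1,0;0,1], !![-1,3;0,1], !![1,0;1,-1], !![2,-3;1,-1], !![-1,3;-1,2],
  !![-2,3;-1,2], !![2,-3;1,-2], !![1,-3;1,-2], !![-2,3;-1,1], !![-1,0;-1,1], !![1,-3;0,-1],
  !![-1,0;0,-1]]

lemma Wmul : ∀ p ∈ Wlist, ∀ q ∈ Wlist, p * q ∈ Wlist := by decide

lemma aform : ∀ g : G2Aff, ∃ p ∈ Wlist, ∃ v, (rho g : M3) = aff p v := by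
  intro g
  refine cs.simple_induction (p := fun g => ∃ p ∈ Wlist, ∃ v, (rho g : M3) = aff p v) g ?_ ?_ ?_
  · intro i
    have hi : i = 0 ∨ i = 1 ∨ i = 2 := by
      fin_cases i
      exacts [Or.inl rfl, Or.inr (Or.inl rfl), Or.inr (Or.inr rfl)]
    rcases hi with rfl | rfl | rfl
    · exact ⟨m1, by decide, 0, congrArg Units.val (rho_simple 0)⟩
    · exact ⟨m2, by decide, 0, congrArg Units.val (rho_simple 1)⟩
    · exact ⟨m3, by decide, th, congrArg Units.val (rho_simple 2)⟩
  · exact ⟨1, by decide, 0, by rw [map_one, Units.val_one, aff_one]⟩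
  · rintro a b ⟨p, hp, u, hu⟩ ⟨q, hq, v, hv⟩
    exact ⟨p * q, Wmul p hp q hq, p.mulVec v + u, by rw [map_mul, Units.val_mul, hu, hv, aff_mul]⟩

lemma invol_fact : ∀ p ∈ Wlist, ∀ q ∈ Wlist, ∀ r ∈ Wlist,
    p * p = 1 → q * q = 1 → p * q = q * p → q * r = r * p → p ≠ 1 → q ≠ 1 → p = q := by decide

lemma center_fact : ∀ p ∈ Wlist, m1 * p = p * m1 → m2 * p = p * m2 →
    p = 1 ∨ p = !![-1,0;0,-1] := by decide

lemma rho_eq_one_of_aff {g : G2Aff} (h : (rho g : M3) = aff 1 0) : g = 1 := by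
  apply rho_inj_one
  apply Units.ext
  rw [h, aff_one, Units.val_one]

lemma noedge {a b : G2Aff} (ha2 : a * a = 1) (hb2 : b * b = 1) (ha1 : a ≠ 1) (hb1 : b ≠ 1)
    (hconj : ∃ c, c * a * c⁻¹ = b) (hcomm : a * b = b * a) : a = b := by
  obtain ⟨p, hp, u, hu⟩ := aform a
  obtain ⟨q, hq, v, hv⟩ := aform b
  obtain ⟨c, hc⟩ := hconj
  obtain ⟨r, hr, w, hw⟩ := aform c
  have hpa : aff (p * p) (p.mulVec u + u) = aff 1 0 := by
    rw [← aff_mul, ← hu, ← Units.val_mul, ← map_mul, ha2, map_one, Units.val_one, aff_one]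
  obtain ⟨hp2, hpu⟩ := aff_inj hpa
  have hqa : aff (q * q) (q.mulVec v + v) = aff 1 0 := by
    rw [← aff_mul, ← hv, ← Units.val_mul, ← map_mul, hb2, map_one, Units.val_one, aff_one]
  obtain ⟨hq2, hqv⟩ := aff_inj hqa
  have hpne : p ≠ 1 := by
    rintro rfl
    rw [Matrix.one_mulVec] at hpu
    have h0 := congrFun hpu 0
    have h1 := congrFun hpu 1
    simp only [Pi.add_apply, Pi.zero_apply] at h0 h1
    have hu0 : u = 0 := by
      funext i; fin_cases i
      · show u 0 = 0; omega
      · show u 1 = 0; omega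
    exact ha1 (rho_eq_one_of_aff (by rw [hu, hu0]))
  have hqne : q ≠ 1 := by
    rintro rfl
    rw [Matrix.one_mulVec] at hqv
    have h0 := congrFun hqv 0
    have h1 := congrFun hqv 1
    simp only [Pi.add_apply, Pi.zero_apply] at h0 h1
    have hv0 : v = 0 := by
      funext i; fin_cases i
      · show v 0 = 0; omega
      · show v 1 = 0; omega
    exact hb1 (rho_eq_one_of_aff (by rw [hv, hv0]))
  have hcm : aff (p * q) (p.mulVec v + u) = aff (q * p) (q.mulVec u + v) := by
    rw [← aff_mul, ← aff_mul, ← hu, ← hv, ← Units.val_mul, ← Units.val_mul, ← map_mul, ← map_mul,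
      hcomm]
  obtain ⟨hpq, hvec⟩ := aff_inj hcm
  have hcj : b * c = c * a := by rw [← hc]; group
  have hcjm : aff (q * r) (q.mulVec w + v) = aff (r * p) (r.mulVec u + w) := by
    rw [← aff_mul, ← aff_mul, ← hv, ← hu, ← hw, ← Units.val_mul, ← Units.val_mul, ← map_mul,
      ← map_mul, hcj]
  obtain ⟨hqr, _⟩ := aff_inj hcjm
  have hpeq : p = q := invol_fact p hp q hq r hr hp2 hq2 hpq hqr hpne hqne
  subst hpeq
  -- now derive u = v
  have huv : u = v := by
    have c0 := congrFun hvec 0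
    have c1 := congrFun hvec 1
    have pu0 := congrFun hpu 0
    have pu1 := congrFun hpu 1
    have pv0 := congrFun hqv 0
    have pv1 := congrFun hqv 1
    simp only [Pi.add_apply, Pi.zero_apply] at c0 c1 pu0 pu1 pv0 pv1
    funext i; fin_cases i
    · show u 0 = v 0; omega
    · show u 1 = v 1; omega
  apply rho_inj
  apply Units.ext
  rw [hu, hv, huv]

lemma not_central : ∀ x : G2Aff, x * x = 1 → x ≠ 1 →
    ∃ i : Fin 3, ¬ (cs.simple i * x = x * cs.simple i) := by
  intro x hx2 hx1
  by_contra hall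
  push_neg at hall
  obtain ⟨p, hp, u, hu⟩ := aform x
  have hs0 : (rho (cs.simple 0) : M3) = aff m1 0 := congrArg Units.val (rho_simple 0)
  have hs1 : (rho (cs.simple 1) : M3) = aff m2 0 := congrArg Units.val (rho_simple 1)
  have hs2 : (rho (cs.simple 2) : M3) = aff m3 th := congrArg Units.val (rho_simple 2)
  have h0 : aff (m1 * p) (m1.mulVec u + 0) = aff (p * m1) (p.mulVec 0 + u) := by
    rw [← aff_mul, ← aff_mul, ← hu, ← hs0, ← Units.val_mul, ← Units.val_mul, ← map_mul, ← map_mul,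
      hall 0]
  have h1 : aff (m2 * p) (m2.mulVec u + 0) = aff (p * m2) (p.mulVec 0 + u) := by
    rw [← aff_mul, ← aff_mul, ← hu, ← hs1, ← Units.val_mul, ← Units.val_mul, ← map_mul, ← map_mul,
      hall 1]
  have h2 : aff (m3 * p) (m3.mulVec u + th) = aff (p * m3) (p.mulVec th + u) := by
    rw [← aff_mul, ← aff_mul, ← hu, ← hs2, ← Units.val_mul, ← Units.val_mul, ← map_mul, ← map_mul,
      hall 2]
  obtain ⟨hc0, hv0⟩ := aff_inj h0
  obtain ⟨_, hv1⟩ := aff_inj h1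
  obtain ⟨_, hv2⟩ := aff_inj h2
  rw [Matrix.mulVec_zero] at hv0 hv1
  -- u = 0
  have hu0 : u = 0 := by
    have a0 := congrFun hv0 0
    have a1 := congrFun hv0 1
    have b0 := congrFun hv1 0
    have b1 := congrFun hv1 1
    simp only [Pi.add_apply, Pi.zero_apply, m1, m2, Matrix.mulVec, dotProduct,
      Fin.sum_univ_two, Matrix.cons_val_zero, Matrix.cons_val_one, Matrix.head_cons,
      Matrix.cons_val', Matrix.empty_val', Matrix.cons_val_fin_one, Matrix.head_fin_const,
      zero_add, add_zero] at a0 a1 b0 b1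
    try norm_num [Matrix.of_apply, Matrix.cons_val', Matrix.cons_val_zero, Matrix.cons_val_one,
      Matrix.head_cons, Matrix.empty_val', Matrix.cons_val_fin_one,
      Matrix.head_fin_const] at a0 a1 b0 b1
    funext i; fin_cases i
    · show u 0 = 0; omega
    · show u 1 = 0; omega
  rcases center_fact p hp hc0 (aff_inj h1).1 with rfl | rfl
  · exact hx1 (rho_eq_one_of_aff (by rw [hu, hu0]))
  · subst hu0
    have c0 := congrFun hv2 0
    simp only [Pi.add_apply, Pi.zero_apply, m3, th, Matrix.mulVec_zero, Matrix.mulVec,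
      dotProduct, Fin.sum_univ_two, Matrix.cons_val_zero, Matrix.cons_val_one,
      Matrix.head_cons, Matrix.cons_val', Matrix.empty_val', Matrix.cons_val_fin_one,
      Matrix.head_fin_const, zero_add, add_zero] at c0
    try norm_num [Matrix.of_apply, Matrix.cons_val', Matrix.cons_val_zero, Matrix.cons_val_one,
      Matrix.head_cons, Matrix.empty_val', Matrix.cons_val_fin_one,
      Matrix.head_fin_const] at c0
    all_goals omega
end G2Proof

/-- Let W̃ be the Coxeter group of type G̃₂ and let x ∈ W̃ be any involution,
with X the conjugacy class of x in W̃.  Then the commuting involution graph C(W̃, X) is not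
connected. -/
theorem stmt13 (x : G2Aff) (hx : orderOf x = 2)
    (X : Set G2Aff) (hX : X = {y | IsConj x y}) :
    ¬ (commGraph G2Aff X).Connected := by
  subst hX
  intro hcon
  have hx1 : x ≠ 1 := by
    intro h
    rw [h, orderOf_one] at hx
    norm_num at hx
  have hxx : x * x = 1 := by
    have := pow_orderOf_eq_one x
    rwa [hx, pow_two] at this
  obtain ⟨i, hi⟩ := G2Proof.not_central x hxx hx1
  set s : G2Aff := G2Proof.cs.simple i with hs
  have hy : IsConj x (s * x * s⁻¹) := isConj_iff.mpr ⟨s, rfl⟩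
  have hxy : x ≠ s * x * s⁻¹ := by
    intro h
    apply hi
    have h2 : x * s = s * x * s⁻¹ * s := by rw [← h]
    rw [mul_assoc, inv_mul_cancel, mul_one] at h2
    exact h2.symm
  have hvx : x ∈ {y | IsConj x y} := IsConj.refl x
  have hvy : (s * x * s⁻¹) ∈ {y | IsConj x y} := hy
  have noadj : ∀ a b : {y | IsConj x y}, ¬ (commGraph G2Aff {y | IsConj x y}).Adj a b := by
    rintro a b (⟨hne, hcm⟩ : (a : G2Aff) ≠ b ∧ (a : G2Aff) * b = b * a)
    apply hne
    have hca : IsConj x ↑a := a.2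
    have hcb : IsConj x ↑b := b.2
    obtain ⟨c, hc⟩ := isConj_iff.mp hca
    obtain ⟨d, hd⟩ := isConj_iff.mp hcb
    have ha2 : (a : G2Aff) * a = 1 := by
      rw [← hc, show c * x * c⁻¹ * (c * x * c⁻¹) = c * (x * x) * c⁻¹ by group, hxx, mul_one,
        mul_inv_cancel]
    have hb2 : (b : G2Aff) * b = 1 := by
      rw [← hd, show d * x * d⁻¹ * (d * x * d⁻¹) = d * (x * x) * d⁻¹ by group, hxx, mul_one,
        mul_inv_cancel]
    have ha1 : (a : G2Aff) ≠ 1 := by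
      intro h
      apply hx1
      rw [h] at hc
      have : x = c⁻¹ * (c * x * c⁻¹) * c := by group
      rw [hc] at this
      rw [this]
      group
    have hb1 : (b : G2Aff) ≠ 1 := by
      intro h
      apply hx1
      rw [h] at hd
      have : x = d⁻¹ * (d * x * d⁻¹) * d := by group
      rw [hd] at this
      rw [this]
      group
    have hab : IsConj (a : G2Aff) (b : G2Aff) := hca.symm.trans hcb
    exact G2Proof.noedge ha2 hb2 ha1 hb1 (isConj_iff.mp hab) hcm
  have hbot : commGraph G2Aff {y | IsConj x y} = ⊥ := by
    ext a b
    simp only [SimpleGraph.bot_adj, iff_false]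
    exact noadj a b
  have hreach := hcon.preconnected ⟨x, hvx⟩ ⟨s * x * s⁻¹, hvy⟩
  rw [hbot] at hreach
  have := SimpleGraph.reachable_bot.mp hreach
  exact hxy (congrArg Subtype.val this)
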